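/- Let l be odd and w ∈ V. Then level([w,A]) = l+1 and level([w,A]) < level([w,B]) (i.e. l+1 is the first level of w) if and only if level([w,A]) > l, level([w,B]) > l (undefined levels counting as > l), and there exists a node [v,B] with level([v,B]) = l and ([v,B],[w,A]) ∈ E_M. In this case the shortest strongly simple paths from s to [w,A] are exactly the shortest strongly simple paths from s to such nodes [v,B] each followed by the edge ([v,B],[w,A]). -/

import Mathlib

variable {V : Type*}

/-- `M` is a matching of the simple graph `G`: a set of edges of `G`,
no two of which share a node. -/
def IsMatchingOn (G : SimpleGraph V) (M : Set (Sym2 V)) : Prop :=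
  M ⊆ G.edgeSet ∧ ∀ e ∈ M, ∀ f ∈ M, ∀ v : V, v ∈ e → v ∈ f → e = f

/-- A node is `M`-free if it is incident to no edge of `M`. -/
def MFree (M : Set (Sym2 V)) (v : V) : Prop := ∀ e ∈ M, v ∉ e

/-- The two labels `A` and `B`. -/
inductive Lbl where
  | A : Lbl
  | B : Lbl

/-- The opposite label: `Ā = B` and `B̄ = A`. -/
def Lbl.flip : Lbl → Lbl
  | .A => .B
  | .B => .A

/-- Nodes of the directed graph `G_M`: the nodes `[v,A]`, `[v,B]` for `v ∈ V`
together with two new nodes `s` and `t`. -/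
inductive GMNode (V : Type*) where
  | inner : V → Lbl → GMNode V
  | s : GMNode V
  | t : GMNode V

/-- The directed adjacency of `G_M`: the edges `([v,A],[w,B])` and
`([w,A],[v,B])` for `(v,w) ∈ M`; the edges `([x,B],[y,A])` and `([y,B],[x,A])`
for `(x,y) ∈ E ∖ M`; and the edges `(s,[v,B])` and `([v,A],t)` for every
`M`-free node `v`. -/
def gmAdj (G : SimpleGraph V) (M : Set (Sym2 V)) : GMNode V → GMNode V → Prop
  | .inner v .A, .inner w .B => s(v, w) ∈ M
  | .inner x .B, .inner y .A => s(x, y) ∈ G.edgeSet \ M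
  | .s, .inner v .B => MFree M v
  | .inner v .A, .t => MFree M v
  | _, _ => False

/-- `p` is a directed path from `u` to `v` with respect to the relation `R`. -/
def IsDirPath {α : Type*} (R : α → α → Prop) (p : List α) (u v : α) : Prop :=
  p.Chain' R ∧ p.head? = some u ∧ p.getLast? = some v

/-- A list of nodes of `G_M` is strongly simple if it has no repeated node and
contains, for each `v ∈ V`, at most one of the two nodes `[v,A]`, `[v,B]`. -/
def StronglySimple (p : List (GMNode V)) : Prop :=
  p.Nodup ∧ ∀ v : V, ¬(GMNode.inner v .A ∈ p ∧ GMNode.inner v .B ∈ p)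

/-- The level of a node of `G_M`: the length of a shortest strongly simple path
from `s` to it (`⊤` if there is no such path, i.e. the level is undefined). -/
noncomputable def gmLevel (G : SimpleGraph V) (M : Set (Sym2 V)) (x : GMNode V) : ℕ∞ :=
  sInf ((fun p : List (GMNode V) => ((p.length - 1 : ℕ) : ℕ∞)) ''
    {p : List (GMNode V) | IsDirPath (gmAdj G M) p GMNode.s x ∧ StronglySimple p})

/-- `p` is a shortest strongly simple path from `s` to `x` in `G_M`. -/
def IsShortestSSP (G : SimpleGraph V) (M : Set (Sym2 V)) (p : List (GMNode V))
    (x : GMNode V) : Prop :=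
  IsDirPath (gmAdj G M) p GMNode.s x ∧ StronglySimple p ∧
    gmLevel G M x = ((p.length - 1 : ℕ) : ℕ∞)

/-! ### Auxiliary lemmas -/

lemma enat_sInf_mem {S : Set ℕ∞} {n : ℕ} (h : sInf S = (n : ℕ∞)) : (n : ℕ∞) ∈ S := by
  by_contra hn
  have h1 : ∀ x ∈ S, (n : ℕ∞) + 1 ≤ x := by
    intro x hx
    rcases lt_or_ge (n : ℕ∞) x with h' | h'
    · exact Order.add_one_le_of_lt h'
    · exact absurd hx (by
        have : x = (n : ℕ∞) := le_antisymm h' (h ▸ sInf_le hx)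
        rw [this]; exact hn)
  have h2 : (n : ℕ∞) + 1 ≤ sInf S := le_sInf h1
  rw [h] at h2
  exact absurd h2 (by
    intro h2
    have := (ENat.add_one_le_iff (by exact_mod_cast WithTop.coe_ne_top)).mp h2
    exact lt_irrefl _ this)

lemma gmLevel_le {G : SimpleGraph V} {M : Set (Sym2 V)} {p : List (GMNode V)} {x : GMNode V}
    (hp : IsDirPath (gmAdj G M) p GMNode.s x) (hss : StronglySimple p) :
    gmLevel G M x ≤ ((p.length - 1 : ℕ) : ℕ∞) :=
  sInf_le ⟨p, ⟨hp, hss⟩, rfl⟩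

lemma gmLevel_exists_path {G : SimpleGraph V} {M : Set (Sym2 V)} {x : GMNode V} {n : ℕ}
    (h : gmLevel G M x = (n : ℕ∞)) :
    ∃ p : List (GMNode V), IsDirPath (gmAdj G M) p GMNode.s x ∧ StronglySimple p ∧
      p.length = n + 1 := by
  obtain ⟨p, ⟨hp, hss⟩, hlen⟩ := enat_sInf_mem h
  have hne : p ≠ [] := by
    intro hnil; rw [hnil] at hp; simp [IsDirPath] at hp
  have hpos : 1 ≤ p.length := List.length_pos_iff.mpr hne
  simp only at hlen
  have : (p.length - 1 : ℕ) = n := by exact_mod_cast hlen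
  exact ⟨p, hp, hss, by omega⟩

lemma ss_sublist {p q : List (GMNode V)} (h : q.Sublist p) (hp : StronglySimple p) :
    StronglySimple q :=
  ⟨hp.1.sublist h, fun v hv => hp.2 v ⟨h.mem hv.1, h.mem hv.2⟩⟩

/-- Every member of a strongly simple dirpath from `s` has level at most the path length. -/
lemma mem_gmLevel_le {G : SimpleGraph V} {M : Set (Sym2 V)} :
    ∀ {p : List (GMNode V)} {y x : GMNode V},
    IsDirPath (gmAdj G M) p GMNode.s y → StronglySimple p → x ∈ p →
    gmLevel G M x ≤ ((p.length - 1 : ℕ) : ℕ∞) := by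
  intro p
  induction p using List.reverseRecOn with
  | nil => intro y x _ _ hx; simp at hx
  | append_singleton q z ih =>
    intro y x hp hss hx
    obtain ⟨hc, hh, hl⟩ := hp
    rcases List.mem_append.1 hx with hxq | hxz
    · have hq : q ≠ [] := by rintro rfl; simp at hxq
      have hch : q.Chain' (gmAdj G M) := hc.left_of_append
      have hhq : q.head? = some GMNode.s := by
        rwa [List.head?_append_of_ne_nil _ hq] at hh
      have hgl : q.getLast? = some (q.getLast hq) := List.getLast?_eq_getLast_of_ne_nil hq
      have hssq : StronglySimple q := ss_sublist (List.sublist_append_left q [z]) hss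
      have := ih ⟨hch, hhq, hgl⟩ hssq hxq
      refine this.trans ?_
      have h2 : q.length - 1 ≤ (q ++ [z]).length - 1 := by
        simp only [List.length_append, List.length_singleton]; omega
      exact_mod_cast Nat.cast_le.mpr h2
    · have hz : x = z := by simpa using hxz
      have hzy : z = y := by
        rw [List.getLast?_concat, Option.some_inj] at hl; exact hl
      subst hzy
      subst hz
      exact gmLevel_le ⟨hc, hh, hl⟩ hss

/-- parity marker -/
def prty : GMNode V → ℕ
  | .s => 0
  | .t => 1
  | .inner _ .A => 0
  | .inner _ .B => 1

lemma prty_adj {G : SimpleGraph V} {M : Set (Sym2 V)} {u v : GMNode V}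
    (h : gmAdj G M u v) : prty u + prty v = 1 := by
  cases u with
  | inner a la =>
    cases la <;> cases v with
    | inner b lb => cases lb <;> simp [prty, gmAdj] at h ⊢
    | s => simp [gmAdj] at h
    | t => simp [prty, gmAdj] at h ⊢
  | s =>
    cases v with
    | inner b lb => cases lb <;> simp [prty, gmAdj] at h ⊢
    | s => simp [gmAdj] at h
    | t => simp [gmAdj] at h
  | t =>
    cases v <;> simp [gmAdj] at h

lemma prty_path {G : SimpleGraph V} {M : Set (Sym2 V)} :
    ∀ {p : List (GMNode V)} {z : GMNode V},
    p.Chain' (gmAdj G M) → p.head? = some GMNode.s → p.getLast? = some z →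
    prty z % 2 = (p.length - 1) % 2 := by
  intro p
  induction p using List.reverseRecOn with
  | nil => intro z _ _ hl; simp at hl
  | append_singleton q z' ih =>
    intro z hc hh hl
    rw [List.getLast?_concat, Option.some_inj] at hl
    subst hl
    rcases eq_or_ne q [] with rfl | hq
    · simp at hh
      subst hh; simp [prty]
    · have hch : q.Chain' (gmAdj G M) := hc.left_of_append
      have hhq : q.head? = some GMNode.s := by
        rwa [List.head?_append_of_ne_nil _ hq] at hh
      have hgl : q.getLast? = some (q.getLast hq) := List.getLast?_eq_getLast_of_ne_nil hq
      have hIH := ih hch hhq hgl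
      have hadj : gmAdj G M (q.getLast hq) z' := by
        have := (List.isChain_append.1 hc).2.2
        exact this _ (by rw [hgl]; rfl) _ rfl
      have hpr := prty_adj hadj
      have hqlen : 1 ≤ q.length := List.length_pos_iff.mpr hq
      simp only [List.length_append, List.length_singleton]
      omega

/-- level of an `A`-node is even, level of a `B`-node is odd (when defined). -/
lemma gmLevel_parity {G : SimpleGraph V} {M : Set (Sym2 V)} {w : V} {lb : Lbl} {n : ℕ}
    (h : gmLevel G M (GMNode.inner w lb) = (n : ℕ∞)) :
    prty (GMNode.inner w lb) % 2 = n % 2 := by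
  obtain ⟨p, hp, _, hlen⟩ := gmLevel_exists_path h
  have := prty_path hp.1 hp.2.1 hp.2.2
  rw [hlen] at this
  simpa using this

/-- Extending a strongly simple path to `[v,B]` by an edge to `[w,A]`,
provided both `[w,A]` and `[w,B]` have level greater than the path length. -/
lemma compose_path {G : SimpleGraph V} {M : Set (Sym2 V)} {q : List (GMNode V)} {v w : V}
    (hq : IsDirPath (gmAdj G M) q GMNode.s (GMNode.inner v Lbl.B)) (hss : StronglySimple q)
    (hadj : gmAdj G M (GMNode.inner v Lbl.B) (GMNode.inner w Lbl.A))
    (hwA : ((q.length - 1 : ℕ) : ℕ∞) < gmLevel G M (GMNode.inner w Lbl.A))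
    (hwB : ((q.length - 1 : ℕ) : ℕ∞) < gmLevel G M (GMNode.inner w Lbl.B)) :
    IsDirPath (gmAdj G M) (q ++ [GMNode.inner w Lbl.A]) GMNode.s (GMNode.inner w Lbl.A) ∧
      StronglySimple (q ++ [GMNode.inner w Lbl.A]) := by
  obtain ⟨hc, hh, hl⟩ := hq
  have hqne : q ≠ [] := by rintro rfl; simp at hh
  have hwAq : GMNode.inner w Lbl.A ∉ q := fun hmem =>
    absurd (mem_gmLevel_le ⟨hc, hh, hl⟩ hss hmem) (not_le.mpr hwA)
  have hwBq : GMNode.inner w Lbl.B ∉ q := fun hmem =>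
    absurd (mem_gmLevel_le ⟨hc, hh, hl⟩ hss hmem) (not_le.mpr hwB)
  refine ⟨⟨?_, ?_, ?_⟩, ?_, ?_⟩
  · refine List.isChain_append.2 ⟨hc, List.isChain_singleton _, ?_⟩
    intro x hx y hy
    have hx' : x = GMNode.inner v Lbl.B := by
      rw [hl] at hx; exact Option.some_inj.1 hx.symm
    have hy' : y = GMNode.inner w Lbl.A := by simpa using hy.symm
    rw [hx', hy']; exact hadj
  · rw [List.head?_append_of_ne_nil _ hqne]; exact hh
  · exact List.getLast?_concat
  · rw [List.nodup_append]
    exact ⟨hss.1, List.nodup_singleton _, by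
      intro a ha b hb heq; simp at hb; subst hb; subst heq; exact hwAq ha⟩
  · intro u ⟨huA, huB⟩
    have huB' : GMNode.inner u Lbl.B ∈ q := by
      rcases List.mem_append.1 huB with h | h
      · exact h
      · simp at h
    rcases List.mem_append.1 huA with huA | huA
    · exact hss.2 u ⟨huA, huB'⟩
    · have : u = w := by simpa [GMNode.inner.injEq] using huA
      subst this; exact hwBq huB'

/-- Decomposing a strongly simple path of length `l+1` from `s` to `[w,A]`. -/
lemma decompose_path {G : SimpleGraph V} {M : Set (Sym2 V)} {p : List (GMNode V)} {w : V} {l : ℕ}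
    (hp : IsDirPath (gmAdj G M) p GMNode.s (GMNode.inner w Lbl.A)) (hss : StronglySimple p)
    (hlen : p.length = l + 2)
    (hA : gmLevel G M (GMNode.inner w Lbl.A) = ((l + 1 : ℕ) : ℕ∞))
    (hB : ((l + 1 : ℕ) : ℕ∞) < gmLevel G M (GMNode.inner w Lbl.B)) :
    ∃ (v : V) (q : List (GMNode V)), gmLevel G M (GMNode.inner v Lbl.B) = (l : ℕ∞) ∧
      gmAdj G M (GMNode.inner v Lbl.B) (GMNode.inner w Lbl.A) ∧
      IsShortestSSP G M q (GMNode.inner v Lbl.B) ∧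
      p = q ++ [GMNode.inner w Lbl.A] := by
  obtain ⟨hc, hh, hl⟩ := hp
  have hpne : p ≠ [] := by rintro rfl; simp at hh
  have hdec : p = p.dropLast ++ [p.getLast hpne] := (List.dropLast_append_getLast hpne).symm
  have hlast : p.getLast hpne = GMNode.inner w Lbl.A := by
    have := List.getLast?_eq_getLast_of_ne_nil hpne
    rw [hl] at this; exact Option.some_inj.1 this.symm
  set q := p.dropLast with hqdef
  have hqlen : q.length = l + 1 := by
    rw [hqdef, List.length_dropLast, hlen]
    omega
  have hqne : q ≠ [] := by
    intro h0; rw [h0] at hqlen; simp at hqlen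
  have hdec' : p = q ++ [GMNode.inner w Lbl.A] := by rw [← hlast]; exact hdec
  have hcq : q.Chain' (gmAdj G M) := by
    rw [hdec'] at hc; exact hc.left_of_append
  have hhq : q.head? = some GMNode.s := by
    rw [hdec', List.head?_append_of_ne_nil _ hqne] at hh; exact hh
  have hglq : q.getLast? = some (q.getLast hqne) := List.getLast?_eq_getLast_of_ne_nil hqne
  have hssq : StronglySimple q := by
    rw [hdec'] at hss; exact ss_sublist (List.sublist_append_left q _) hss
  have hadj : gmAdj G M (q.getLast hqne) (GMNode.inner w Lbl.A) := by
    rw [hdec'] at hc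
    exact (List.isChain_append.1 hc).2.2 _ (by rw [hglq]; rfl) _ rfl
  -- the predecessor must be a `B`-node
  obtain ⟨v, hv⟩ : ∃ v : V, q.getLast hqne = GMNode.inner v Lbl.B := by
    rcases hu : q.getLast hqne with (⟨a, (_ | _)⟩ | _ | _)
    · rw [hu] at hadj; simp [gmAdj] at hadj
    · exact ⟨a, rfl⟩
    · rw [hu] at hadj; simp [gmAdj] at hadj
    · rw [hu] at hadj; simp [gmAdj] at hadj
  rw [hv] at hadj hglq
  have hqpath : IsDirPath (gmAdj G M) q GMNode.s (GMNode.inner v Lbl.B) := ⟨hcq, hhq, hglq⟩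
  have hle : gmLevel G M (GMNode.inner v Lbl.B) ≤ (l : ℕ∞) := by
    have := gmLevel_le hqpath hssq
    rwa [hqlen, Nat.add_sub_cancel] at this
  -- level of [v,B] is exactly l
  have hvl : gmLevel G M (GMNode.inner v Lbl.B) = (l : ℕ∞) := by
    have hne : gmLevel G M (GMNode.inner v Lbl.B) ≠ ⊤ :=
      fun h0 => by rw [h0] at hle; exact absurd hle (by simp)
    obtain ⟨m, hm⟩ := WithTop.ne_top_iff_exists.1 hne
    have hm' : gmLevel G M (GMNode.inner v Lbl.B) = (m : ℕ∞) := hm.symm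
    have hml : m ≤ l := by rw [hm'] at hle; exact_mod_cast hle
    obtain ⟨q', hq', hssq', hlen'⟩ := gmLevel_exists_path hm'
    have hq'len : (q'.length - 1 : ℕ) = m := by omega
    have hA' : ((q'.length - 1 : ℕ) : ℕ∞) < gmLevel G M (GMNode.inner w Lbl.A) := by
      rw [hq'len, hA]; exact_mod_cast Nat.lt_succ_of_le hml
    have hB' : ((q'.length - 1 : ℕ) : ℕ∞) < gmLevel G M (GMNode.inner w Lbl.B) := by
      refine lt_trans ?_ hB
      rw [hq'len]; exact_mod_cast Nat.lt_succ_of_le hml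
    obtain ⟨hpath2, hss2⟩ := compose_path hq' hssq' hadj hA' hB'
    have := gmLevel_le hpath2 hss2
    rw [hA] at this
    have hlen2 : ((q' ++ [GMNode.inner w Lbl.A]).length - 1 : ℕ) = m + 1 := by
      simp only [List.length_append, List.length_singleton]; omega
    rw [hlen2] at this
    have : l + 1 ≤ m + 1 := by exact_mod_cast this
    have : m = l := by omega
    rw [hm', this]
  refine ⟨v, q, hvl, hadj, ⟨hqpath, hssq, ?_⟩, hdec'⟩
  rw [hvl, hqlen, Nat.add_sub_cancel]


/-- Let `l` be odd and `w ∈ V`.  Then `level([w,A]) = l+1` is the first level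
of `w` iff `level([w,A]) > l`, `level([w,B]) > l` (undefined levels counting
as `⊤ > l`) and there is a node `[v,B]` with `level([v,B]) = l` and
`([v,B],[w,A]) ∈ E_M`.  In this case the shortest strongly simple paths from
`s` to `[w,A]` are exactly the shortest strongly simple paths from `s` to such
nodes `[v,B]`, each followed by the edge `([v,B],[w,A])`. -/
theorem first_level_odd_step (G : SimpleGraph V) (M : Set (Sym2 V))
    (hM : IsMatchingOn G M) (l : ℕ) (hl : Odd l) (w : V) :
    ((gmLevel G M (.inner w .A) = ((l + 1 : ℕ) : ℕ∞) ∧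
        gmLevel G M (.inner w .A) < gmLevel G M (.inner w .B)) ↔
      ((l : ℕ∞) < gmLevel G M (.inner w .A) ∧ (l : ℕ∞) < gmLevel G M (.inner w .B) ∧
        ∃ v : V, gmLevel G M (.inner v .B) = (l : ℕ∞) ∧
          gmAdj G M (.inner v .B) (.inner w .A))) ∧
    ((gmLevel G M (.inner w .A) = ((l + 1 : ℕ) : ℕ∞) ∧
        gmLevel G M (.inner w .A) < gmLevel G M (.inner w .B)) →
      ∀ p : List (GMNode V),
        IsShortestSSP G M p (.inner w .A) ↔
          ∃ (v : V) (q : List (GMNode V)),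
            gmLevel G M (.inner v .B) = (l : ℕ∞) ∧
            gmAdj G M (.inner v .B) (.inner w .A) ∧
            IsShortestSSP G M q (.inner v .B) ∧
            p = q ++ [.inner w .A]) := by
  have hcast : ((l + 1 : ℕ) : ℕ∞) = (l : ℕ∞) + 1 := by push_cast; ring
  have hllt : (l : ℕ∞) < ((l + 1 : ℕ) : ℕ∞) := by exact_mod_cast Nat.lt_succ_self l
  constructor
  · constructor
    · rintro ⟨hA, hlt⟩
      have hBgt : ((l + 1 : ℕ) : ℕ∞) < gmLevel G M (.inner w .B) := hA ▸ hlt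
      refine ⟨by rw [hA]; exact hllt, lt_trans hllt hBgt, ?_⟩
      obtain ⟨p, hp, hss, hlen⟩ := gmLevel_exists_path hA
      obtain ⟨v, q, hvl, hadj, _, _⟩ := decompose_path hp hss (by omega) hA hBgt
      exact ⟨v, hvl, hadj⟩
    · rintro ⟨hwA, hwB, v, hvl, hadj⟩
      obtain ⟨q, hq, hssq, hlen⟩ := gmLevel_exists_path hvl
      have hql : (q.length - 1 : ℕ) = l := by omega
      obtain ⟨hpath, hss2⟩ :=
        compose_path hq hssq hadj (by rw [hql]; exact hwA) (by rw [hql]; exact hwB)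
      have hle := gmLevel_le hpath hss2
      have hlen2 : ((q ++ [GMNode.inner w Lbl.A]).length - 1 : ℕ) = l + 1 := by
        simp only [List.length_append, List.length_singleton]; omega
      rw [hlen2] at hle
      have hAeq : gmLevel G M (.inner w .A) = ((l + 1 : ℕ) : ℕ∞) := by
        refine le_antisymm hle ?_
        rw [hcast]
        exact Order.add_one_le_of_lt hwA
      refine ⟨hAeq, ?_⟩
      rw [hAeq]
      rcases eq_or_ne (gmLevel G M (.inner w .B)) ⊤ with htop | hne
      · rw [htop]; exact lt_top_iff_ne_top.mpr (by exact_mod_cast WithTop.coe_ne_top)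
      · obtain ⟨m, hm⟩ := WithTop.ne_top_iff_exists.1 hne
        have hpar := gmLevel_parity hm.symm
        simp only [prty] at hpar
        have hlm : l < m := by
          have := hwB; rw [← hm] at this; exact Nat.cast_lt.mp this
        obtain ⟨k, hk⟩ := hl
        have : l + 1 < m := by omega
        rw [← hm]; exact Nat.cast_lt.mpr this
  · rintro ⟨hA, hlt⟩ p
    have hBgt : ((l + 1 : ℕ) : ℕ∞) < gmLevel G M (.inner w .B) := hA ▸ hlt
    constructor
    · rintro ⟨hp, hss, hplen⟩
      rw [hA] at hplen
      have hpne : p ≠ [] := by rintro rfl; simp [IsDirPath] at hp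
      have hpos : 1 ≤ p.length := List.length_pos_iff.mpr hpne
      have hpl : (p.length - 1 : ℕ) = l + 1 := by exact_mod_cast hplen.symm
      exact decompose_path hp hss (by omega) hA hBgt
    · rintro ⟨v, q, hvl, hadj, ⟨hq, hssq, hqlevel⟩, rfl⟩
      have hqlen : ((q.length - 1 : ℕ) : ℕ∞) = (l : ℕ∞) := hvl ▸ hqlevel.symm
      have hql : (q.length - 1 : ℕ) = l := by exact_mod_cast hqlen
      obtain ⟨hpath, hss2⟩ :=
        compose_path hq hssq hadj (by rw [hql, hA]; exact hllt)
          (by rw [hql]; exact lt_trans hllt hBgt)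
      have hqne : q ≠ [] := by rintro rfl; simp [IsDirPath] at hq
      have hqpos : 1 ≤ q.length := List.length_pos_iff.mpr hqne
      refine ⟨hpath, hss2, ?_⟩
      rw [hA]
      congr 1
      simp only [List.length_append, List.length_singleton]
      omega
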